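/- For every upper unitriangular matrix u over a field, permutation w ∈ S_n, there exist matrices u' upper unitriangular with u'_{ij} = 0 for all (i,j) ∉ inv(w), and u'' upper unitriangular, such that u·w = u'·w·u'' (identifying w with its permutation matrix). Consequently UwB = U(w)wB, where U is the group of upper unitriangular matrices and B the upper triangular invertible matrices. -/

import Mathlib

open Equiv

/-- Inversions of `w` (right action `i · w = w i`). -/
def invSet {n : ℕ} (w : Perm (Fin n)) : Finset (Fin n × Fin n) :=
  Finset.univ.filter fun p => p.1 < p.2 ∧ w p.2 < w p.1

/-- The permutation matrix `(δ_{i·w, j})_{ij}` of `w`. -/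
def permMat {F : Type*} [Field F] {n : ℕ} (w : Perm (Fin n)) :
    Matrix (Fin n) (Fin n) F :=
  fun i j => if w i = j then 1 else 0

/-- Upper unitriangular matrices. -/
def IsUnitriangular {F : Type*} [Field F] {n : ℕ}
    (u : Matrix (Fin n) (Fin n) F) : Prop :=
  (∀ i, u i i = 1) ∧ ∀ i j : Fin n, j < i → u i j = 0

/-- Membership in `U(w)`: unitriangular and vanishing at superdiagonal
positions outside `inv(w)`. -/
def MemUw {F : Type*} [Field F] {n : ℕ} (w : Perm (Fin n))
    (u : Matrix (Fin n) (Fin n) F) : Prop :=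
  IsUnitriangular u ∧ ∀ i j : Fin n, i < j → (i, j) ∉ invSet w → u i j = 0

/-- Invertible upper triangular matrices (the Borel subgroup `B`). -/
def MemBorel {F : Type*} [Field F] {n : ℕ}
    (b : Matrix (Fin n) (Fin n) F) : Prop :=
  IsUnit b.det ∧ ∀ i j : Fin n, j < i → b i j = 0

namespace UDaux

open Finset Matrix

variable {F : Type*} [Field F] {n : ℕ}

lemma mul_permMat (A : Matrix (Fin n) (Fin n) F) (w : Perm (Fin n)) (a b : Fin n) :
    (A * (permMat w : Matrix (Fin n) (Fin n) F)) a b = A a (w⁻¹ b) := by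
  rw [Matrix.mul_apply, Finset.sum_eq_single (w⁻¹ b)]
  · simp [permMat]
  · intro j _ hj
    have : w j ≠ b := fun h => hj (by rw [← h]; simp)
    simp [permMat, this]
  · intro h; exact absurd (Finset.mem_univ _) h

lemma permMat_mul (w : Perm (Fin n)) (A : Matrix (Fin n) (Fin n) F) (a b : Fin n) :
    ((permMat w : Matrix (Fin n) (Fin n) F) * A) a b = A (w a) b := by
  rw [Matrix.mul_apply, Finset.sum_eq_single (w a)]
  · simp [permMat]
  · intro j _ hj
    simp [permMat, Ne.symm hj]
  · intro h; exact absurd (Finset.mem_univ _) h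

lemma permMat_mul_inv (w : Perm (Fin n)) :
    (permMat w : Matrix (Fin n) (Fin n) F) * permMat w⁻¹ = 1 := by
  ext a b
  rw [permMat_mul]
  simp [permMat, Matrix.one_apply]

open scoped Classical in
noncomputable def badSet (w : Perm (Fin n)) (u : Matrix (Fin n) (Fin n) F) :
    Finset (Fin n × Fin n) :=
  Finset.univ.filter fun p => p.1 < p.2 ∧ w p.1 < w p.2 ∧ u p.1 p.2 ≠ 0

noncomputable def meas (w : Perm (Fin n)) (u : Matrix (Fin n) (Fin n) F) : ℕ :=
  ∑ p ∈ badSet w u, (n+1)^(p.1 : ℕ)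

lemma geom (n : ℕ) : ∀ k, (∑ a ∈ Finset.range k, n * (n+1)^a) + 1 = (n+1)^k := by
  intro k
  induction k with
  | zero => simp
  | succ k ih =>
    rw [Finset.sum_range_succ, pow_succ, add_right_comm, ih]
    ring


lemma rowSum_lt (i : Fin n) :
    ∑ p ∈ Finset.univ.filter (fun p : Fin n × Fin n => p.1 < i), (n+1)^(p.1:ℕ)
      < (n+1)^(i:ℕ) := by
  have h1 : Finset.univ.filter (fun p : Fin n × Fin n => p.1 < i)
      = (Finset.univ.filter (· < i)) ×ˢ Finset.univ := by
    ext p; simp [Finset.mem_product]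
  rw [h1, Finset.sum_product]
  simp only [Finset.sum_const, Finset.card_univ, Fintype.card_fin, smul_eq_mul]
  have h2 : ∑ x ∈ Finset.univ.filter (· < i), n * (n+1)^(x:Fin n).val
      = ∑ a ∈ (Finset.univ.filter (· < i)).image Fin.val, n * (n+1)^a :=
    (Finset.sum_image (f := fun a : ℕ => n * (n+1)^a) (g := Fin.val)
      (fun x _ y _ h => Fin.val_injective h)).symm
  rw [h2]
  have hsub : (Finset.univ.filter (· < i)).image Fin.val ⊆ Finset.range (i : ℕ) := by
    intro a ha
    simp only [Finset.mem_image, Finset.mem_filter, Finset.mem_univ, true_and] at ha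
    obtain ⟨x, hx, rfl⟩ := ha
    exact Finset.mem_range.2 hx
  have h3 : ∑ a ∈ (Finset.univ.filter (· < i)).image Fin.val, n * (n+1)^a
      ≤ ∑ a ∈ Finset.range (i:ℕ), n * (n+1)^a :=
    Finset.sum_le_sum_of_subset hsub
  have h4 := geom n (i : ℕ)
  omega

lemma base (w : Perm (Fin n)) (u : Matrix (Fin n) (Fin n) F)
    (h0 : meas w u = 0) (hu : IsUnitriangular u) : MemUw w u := by
  refine ⟨hu, fun i j hij hninv => ?_⟩
  by_contra hne
  have hw : w i < w j := by
    rcases lt_trichotomy (w i) (w j) with h | h | h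
    · exact h
    · exact absurd (w.injective h) hij.ne
    · exfalso
      apply hninv
      simp only [invSet, Finset.mem_filter, Finset.mem_univ, true_and]
      exact ⟨hij, h⟩
  have hmem : (i, j) ∈ badSet w u := by
    simp only [badSet, Finset.mem_filter, Finset.mem_univ, true_and]
    exact ⟨hij, hw, hne⟩
  have := Finset.sum_eq_zero_iff.1 h0 _ hmem
  exact absurd this (pow_ne_zero _ (Nat.succ_ne_zero n))

lemma mul_elem (A : Matrix (Fin n) (Fin n) F) (i m : Fin n) (c : F) (a b : Fin n) :
    (A * (1 + Matrix.single i m c)) a b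
      = A a b + if b = m then A a i * c else 0 := by
  rw [Matrix.mul_add, Matrix.mul_one, Matrix.add_apply]
  rcases eq_or_ne b m with rfl | hb
  · simp
  · simp [Matrix.mul_single_apply_of_ne (c := c) i m a b hb A, hb]

lemma elem_inv (i m : Fin n) (hm : i ≠ m) (c : F) :
    (1 + Matrix.single i m c) * (1 + Matrix.single i m (-c))
      = (1 : Matrix (Fin n) (Fin n) F) := by
  have h2 : (Matrix.single i m c : Matrix (Fin n) (Fin n) F) *
      Matrix.single i m (-c) = 0 :=
    Matrix.single_mul_single_of_ne (c := c) i m i (Ne.symm hm) (-c)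
  ext a b
  rw [Matrix.add_mul, Matrix.one_mul, Matrix.mul_add, Matrix.mul_one, h2]
  simp only [Matrix.add_apply, Matrix.single, Matrix.of_apply, Matrix.zero_apply]
  split <;> ring


lemma one_unitriangular : IsUnitriangular (1 : Matrix (Fin n) (Fin n) F) :=
  ⟨fun i => Matrix.one_apply_eq i, fun i j h => Matrix.one_apply_ne h.ne'⟩

lemma key (w : Perm (Fin n)) :
    ∀ (N : ℕ) (u : Matrix (Fin n) (Fin n) F), meas w u ≤ N → IsUnitriangular u →
    ∃ u' v : Matrix (Fin n) (Fin n) F, MemUw w u' ∧ IsUnitriangular v ∧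
      (∀ a b : Fin n, a ≠ b → ¬(a < b ∧ w a < w b) → v a b = 0) ∧ u = u' * v := by
  intro N
  induction N with
  | zero =>
    intro u hm hu
    exact ⟨u, 1, base w u (Nat.le_zero.1 hm) hu, one_unitriangular,
      fun a b hab _ => Matrix.one_apply_ne hab, (Matrix.mul_one u).symm⟩
  | succ N ih =>
    intro u hm hu
    by_cases h0 : meas w u = 0
    · exact ⟨u, 1, base w u h0 hu, one_unitriangular,
        fun a b hab _ => Matrix.one_apply_ne hab, (Matrix.mul_one u).symm⟩
    have hne : (badSet w u).Nonempty := by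
      rw [Finset.nonempty_iff_ne_empty]
      intro h
      exact h0 (by simp [meas, h])
    obtain ⟨⟨i, m⟩, hp⟩ := hne
    have hp' : i < m ∧ w i < w m ∧ u i m ≠ 0 := by
      simpa [badSet] using hp
    obtain ⟨him, hwim, hne0⟩ := hp'
    set c : F := - u i m with hc
    set u₁ := u * (1 + Matrix.single i m c) with hu₁
    have hentry : ∀ a b, u₁ a b = u a b + if b = m then u a i * c else 0 :=
      fun a b => mul_elem u i m c a b
    have hu₁tri : IsUnitriangular u₁ := by
      constructor
      · intro a
        rw [hentry a a]
        rcases eq_or_ne a m with rfl | ham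
        · rw [if_pos rfl, hu.2 a i him, hu.1 a]; ring
        · rw [if_neg ham, hu.1 a, add_zero]
      · intro a b hba
        rw [hentry a b, hu.2 a b hba]
        rcases eq_or_ne b m with rfl | hbm
        · rw [if_pos rfl, hu.2 a i (him.trans hba)]; ring
        · rw [if_neg hbm, add_zero]
    have hsub : badSet w u₁ ⊆ ((badSet w u).erase (i, m))
        ∪ Finset.univ.filter (fun p : Fin n × Fin n => p.1 < i) := by
      rintro ⟨a, b⟩ hq
      have hq' : a < b ∧ w a < w b ∧ u₁ a b ≠ 0 := by simpa [badSet] using hq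
      obtain ⟨hab, hwab, hne1⟩ := hq'
      rcases lt_trichotomy a i with hai | rfl | hia
      · exact Finset.mem_union_right _ (by simp [hai])
      · rcases eq_or_ne b m with rfl | hbm
        · exfalso
          apply hne1
          rw [hentry a b, if_pos rfl, hu.1 a, one_mul, hc]
          ring
        · refine Finset.mem_union_left _ (Finset.mem_erase.2 ⟨by simp [hbm], ?_⟩)
          have : u a b ≠ 0 := by
            rw [hentry a b, if_neg hbm, add_zero] at hne1; exact hne1
          simp only [badSet, Finset.mem_filter, Finset.mem_univ, true_and]
          exact ⟨hab, hwab, this⟩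
      · have : u a b ≠ 0 := by
          rw [hentry a b] at hne1
          rcases eq_or_ne b m with rfl | hbm
          · rw [if_pos rfl, hu.2 a i hia, zero_mul, add_zero] at hne1; exact hne1
          · rw [if_neg hbm, add_zero] at hne1; exact hne1
        refine Finset.mem_union_left _ (Finset.mem_erase.2 ⟨by simp [hia.ne'], ?_⟩)
        simp only [badSet, Finset.mem_filter, Finset.mem_univ, true_and]
        exact ⟨hab, hwab, this⟩
    have hmeas : meas w u₁ < meas w u := by
      have hpmem : (i, m) ∈ badSet w u := hp
      have h1 : meas w u₁ ≤ ∑ p ∈ ((badSet w u).erase (i, m))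
          ∪ Finset.univ.filter (fun p : Fin n × Fin n => p.1 < i), (n+1)^(p.1:ℕ) :=
        Finset.sum_le_sum_of_subset hsub
      have h2 : ∑ p ∈ ((badSet w u).erase (i, m))
          ∪ Finset.univ.filter (fun p : Fin n × Fin n => p.1 < i), (n+1)^(p.1:ℕ)
          ≤ (∑ p ∈ (badSet w u).erase (i, m), (n+1)^(p.1:ℕ))
            + ∑ p ∈ Finset.univ.filter (fun p : Fin n × Fin n => p.1 < i), (n+1)^(p.1:ℕ) := by
        rw [← Finset.union_sdiff_self_eq_union, Finset.sum_union Finset.disjoint_sdiff]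
        exact Nat.add_le_add_left (Finset.sum_le_sum_of_subset (Finset.sdiff_subset)) _
      have h3 : (∑ p ∈ (badSet w u).erase (i, m), (n+1)^(p.1:ℕ)) + (n+1)^(i:ℕ)
          = meas w u := Finset.sum_erase_add _ _ hpmem
      have h4 := rowSum_lt i
      omega
    obtain ⟨u', v, hu', hv, hvsupp, heq⟩ := ih u₁ (by omega) hu₁tri
    have hvy : ∀ a b, (v * (1 + Matrix.single i m (-c))) a b
        = v a b + if b = m then v a i * (-c) else 0 :=
      fun a b => mul_elem v i m (-c) a b
    refine ⟨u', v * (1 + Matrix.single i m (-c)), hu', ?_, ?_, ?_⟩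
    · constructor
      · intro a
        rw [hvy a a]
        rcases eq_or_ne a m with rfl | ham
        · rw [if_pos rfl, hv.2 a i him, hv.1 a]; ring
        · rw [if_neg ham, hv.1 a, add_zero]
      · intro a b hba
        rw [hvy a b, hv.2 a b hba]
        rcases eq_or_ne b m with rfl | hbm
        · rw [if_pos rfl, hv.2 a i (him.trans hba)]; ring
        · rw [if_neg hbm, add_zero]
    · intro a b hab hnab
      rw [hvy a b, hvsupp a b hab hnab]
      rcases eq_or_ne b m with rfl | hbm
      · rw [if_pos rfl]
        have hvai : v a i = 0 := by
          rcases eq_or_ne a i with rfl | hai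
          · exact absurd ⟨him, hwim⟩ hnab
          · refine hvsupp a i hai ?_
            rintro ⟨h1, h2⟩
            exact hnab ⟨h1.trans him, h2.trans hwim⟩
        rw [hvai]; ring
      · rw [if_neg hbm, add_zero]
    · have hxinv : u = u₁ * (1 + Matrix.single i m (-c)) := by
        rw [hu₁, Matrix.mul_assoc, elem_inv i m him.ne c, Matrix.mul_one]
      rw [hxinv, heq, Matrix.mul_assoc]

end UDaux

/-- For every unitriangular `u` there are `u' ∈ U(w)` and unitriangular `u''`
with `u·w = u'·w·u''`; consequently `UwB = U(w)wB`. -/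
theorem unitriangular_decomposition {F : Type*} [Field F] {n : ℕ}
    (w : Perm (Fin n)) :
    (∀ u : Matrix (Fin n) (Fin n) F, IsUnitriangular u →
      ∃ u' u'' : Matrix (Fin n) (Fin n) F, MemUw w u' ∧ IsUnitriangular u'' ∧
        u * permMat w = u' * permMat w * u'') ∧
    {m : Matrix (Fin n) (Fin n) F |
        ∃ u b, IsUnitriangular u ∧ MemBorel b ∧ m = u * permMat w * b} =
      {m : Matrix (Fin n) (Fin n) F |
        ∃ u b, MemUw w u ∧ MemBorel b ∧ m = u * permMat w * b} := by
  have part1 : ∀ u : Matrix (Fin n) (Fin n) F, IsUnitriangular u →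
      ∃ u' u'' : Matrix (Fin n) (Fin n) F, MemUw w u' ∧ IsUnitriangular u'' ∧
        u * permMat w = u' * permMat w * u'' := by
    intro u hu
    obtain ⟨u', v, hu', hv, hvs, heq⟩ := UDaux.key w (UDaux.meas w u) u le_rfl hu
    refine ⟨u', permMat w⁻¹ * v * permMat w, hu', ?_, ?_⟩
    · have happ : ∀ a b, (permMat w⁻¹ * v * permMat w : Matrix (Fin n) (Fin n) F) a b
          = v (w⁻¹ a) (w⁻¹ b) := by
        intro a b
        rw [UDaux.mul_permMat, UDaux.permMat_mul]
      constructor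
      · intro a; rw [happ a a, hv.1]
      · intro a b hba
        rw [happ a b]
        rcases lt_or_ge (w⁻¹ b) (w⁻¹ a) with h | h
        · exact hv.2 _ _ h
        · refine hvs _ _ (fun hh => hba.ne' (Equiv.injective w⁻¹ hh)) ?_
          rintro ⟨-, h2⟩
          simp only [Equiv.Perm.coe_inv, Equiv.apply_symm_apply] at h2
          exact absurd h2 (not_lt.2 hba.le)
    · calc u * permMat w = (u' * v) * permMat w := by rw [heq]
        _ = u' * (1 : Matrix (Fin n) (Fin n) F) * v * permMat w := by
            rw [Matrix.mul_one]
        _ = u' * ((permMat w : Matrix (Fin n) (Fin n) F) * permMat w⁻¹) * v * permMat w := by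
            rw [UDaux.permMat_mul_inv]
        _ = u' * permMat w * (permMat w⁻¹ * v * permMat w) := by
            simp only [Matrix.mul_assoc]
  refine ⟨part1, Set.ext fun m' => ?_⟩
  constructor
  · rintro ⟨u, b, hu, hb, rfl⟩
    obtain ⟨u', u'', hu', hu'', heq⟩ := part1 u hu
    refine ⟨u', u'' * b, hu', ⟨?_, ?_⟩, ?_⟩
    · have hdet : (u'' : Matrix (Fin n) (Fin n) F).det = 1 := by
        rw [Matrix.det_of_upperTriangular (fun i j hij => hu''.2 i j hij)]
        simp [hu''.1]
      rw [Matrix.det_mul, hdet, one_mul]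
      exact hb.1
    · intro i j hji
      rw [Matrix.mul_apply]
      refine Finset.sum_eq_zero fun k _ => ?_
      rcases lt_or_ge k i with h | h
      · rw [hu''.2 i k h, zero_mul]
      · rw [hb.2 k j (hji.trans_le h), mul_zero]
    · rw [heq, Matrix.mul_assoc]
  · rintro ⟨u, b, hu, hb, rfl⟩
    exact ⟨u, b, hu.1, hb, rfl⟩
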